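/- arXiv:2403.16975 — 2 statements merged into one kernel-verified Lean document; each statement's English description precedes it below -/
import Mathlib

section
/- For all real x, y > 0 and parameters α₂, σ > 0, r > 1 with r + 1 > 2ρ and ρ > 1, there exist constants υ > 2 and L > 0 such that (x - y)(f(x) - f(y)) + ((υ - 1)/2)|g(x) - g(y)|² ≤ L|x - y|², where f(x) = -α₂ x^r and g(x) = σ x^ρ. -/
open Real

-- Bernoulli-type bound: for 0 < y ≤ x and ρ ≥ 1, x^ρ - y^ρ ≤ ρ * x^(ρ-1) * (x - y)
lemma rpow_sub_rpow_le (x y ρ : ℝ) (hy : 0 < y) (hxy : y ≤ x) (hρ : 1 ≤ ρ) :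
    x ^ ρ - y ^ ρ ≤ ρ * x ^ (ρ - 1) * (x - y) := by
  have hx : 0 < x := hy.trans_le hxy
  have ht : -1 ≤ y / x - 1 := by
    have : 0 ≤ y / x := le_of_lt (div_pos hy hx)
    linarith
  have hb := one_add_mul_self_le_rpow_one_add ht hρ
  rw [show (1:ℝ) + (y / x - 1) = y / x by ring] at hb
  -- hb : 1 + ρ * (y / x - 1) ≤ (y / x) ^ ρ
  have hdiv : (y / x) ^ ρ = y ^ ρ / x ^ ρ := Real.div_rpow hy.le hx.le ρ
  rw [hdiv] at hb
  have hxρ : (0:ℝ) < x ^ ρ := Real.rpow_pos_of_pos hx ρ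
  have hmul := mul_le_mul_of_nonneg_right hb hxρ.le
  rw [div_mul_cancel₀ _ (ne_of_gt hxρ)] at hmul
  -- hmul : (1 + ρ * (y / x - 1)) * x ^ ρ ≤ y ^ ρ
  have hsplit : x ^ ρ = x ^ (ρ - 1) * x := by
    rw [← Real.rpow_add_one (ne_of_gt hx) (ρ - 1), sub_add_cancel]
  have hyx : (y / x - 1) * x = y - x := by field_simp
  have key : ρ * ((y / x - 1) * x ^ ρ) = ρ * ((y - x) * x ^ (ρ - 1)) := by
    rw [hsplit, show (y / x - 1) * (x ^ (ρ - 1) * x) = (y / x - 1) * x * x ^ (ρ - 1) from by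
      ring, hyx]
  nlinarith [hmul, key]

lemma le_rpow_sub_rpow (x y r : ℝ) (hy : 0 < y) (hxy : y ≤ x) (hr : 1 ≤ r) :
    x ^ (r - 1) * (x - y) ≤ x ^ r - y ^ r := by
  have hx : 0 < x := hy.trans_le hxy
  have hsplit : x ^ r = x ^ (r - 1) * x := by
    rw [← Real.rpow_add_one (ne_of_gt hx) (r - 1), sub_add_cancel]
  have hmono : y ^ (r - 1) ≤ x ^ (r - 1) :=
    Real.rpow_le_rpow hy.le hxy (by linarith)
  have hsplit' : y ^ r = y ^ (r - 1) * y := by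
    rw [← Real.rpow_add_one (ne_of_gt hy) (r - 1), sub_add_cancel]
  nlinarith [Real.rpow_pos_of_pos hy (r - 1)]

-- Young-type bound: k t^a ≤ α t^b + L for 0 < a < b.
lemma young_bound (k α a b : ℝ) (hk : 0 < k) (hα : 0 < α) (ha : 0 < a) (hab : a < b) :
    ∃ L : ℝ, 0 < L ∧ ∀ t : ℝ, 0 < t → k * t ^ a ≤ α * t ^ b + L := by
  set T : ℝ := (k / α) ^ (1 / (b - a)) with hT
  have hkα : 0 < k / α := div_pos hk hα
  have hTpos : 0 < T := Real.rpow_pos_of_pos hkα _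
  refine ⟨k * T ^ a, mul_pos hk (Real.rpow_pos_of_pos hTpos a), fun t ht => ?_⟩
  have hba : b - a ≠ 0 := by linarith
  have hTba : T ^ (b - a) = k / α := by
    rw [hT, ← Real.rpow_mul hkα.le, one_div, inv_mul_cancel₀ hba, Real.rpow_one]
  rcases le_total t T with h | h
  · have h1 : t ^ a ≤ T ^ a := Real.rpow_le_rpow ht.le h ha.le
    have h2 : 0 ≤ α * t ^ b := le_of_lt (mul_pos hα (Real.rpow_pos_of_pos ht b))
    nlinarith
  · -- T ≤ t: k t^a ≤ α t^b
    have h1 : t ^ (a - b) ≤ T ^ (a - b) :=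
      Real.rpow_le_rpow_of_nonpos hTpos h (by linarith)
    have hTab : T ^ (a - b) = α / k := by
      rw [show a - b = -(b - a) by ring, Real.rpow_neg hTpos.le, hTba, inv_div]
    rw [hTab] at h1
    have hsplit : t ^ a = t ^ b * t ^ (a - b) := by
      rw [← Real.rpow_add ht, add_sub_cancel]
    have htb : 0 < t ^ b := Real.rpow_pos_of_pos ht b
    have h3 : k * t ^ a ≤ α * t ^ b := by
      rw [hsplit]
      calc k * (t ^ b * t ^ (a - b)) ≤ k * (t ^ b * (α / k)) := by
            apply mul_le_mul_of_nonneg_left _ hk.le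
            exact mul_le_mul_of_nonneg_left h1 htb.le
        _ = α * t ^ b := by field_simp
    have : 0 < k * T ^ a := mul_pos hk (Real.rpow_pos_of_pos hTpos a)
    linarith

lemma main_aux (α₂ σ r ρ L : ℝ) (hα₂ : 0 < α₂) (hσ : 0 < σ) (hr : 1 < r) (hρ : 1 < ρ)
    (hL : ∀ t : ℝ, 0 < t → σ ^ 2 * ρ ^ 2 * t ^ (2 * ρ - 2) ≤ α₂ * t ^ (r - 1) + L)
    (x y : ℝ) (hy : 0 < y) (hxy : y ≤ x) :
    (x - y) * ((-α₂ * x ^ r) - (-α₂ * y ^ r))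
        + (3 - 1) / 2 * |σ * x ^ ρ - σ * y ^ ρ| ^ 2 ≤ L * |x - y| ^ 2 := by
  have hx : 0 < x := hy.trans_le hxy
  have h1 := le_rpow_sub_rpow x y r hy hxy hr.le
  have h2 := rpow_sub_rpow_le x y ρ hy hxy hρ.le
  have h2' : 0 ≤ x ^ ρ - y ^ ρ := by
    have := Real.rpow_le_rpow hy.le hxy (by linarith : (0:ℝ) ≤ ρ); linarith
  have habs : |σ * x ^ ρ - σ * y ^ ρ| = σ * (x ^ ρ - y ^ ρ) := by
    rw [abs_of_nonneg] <;> nlinarith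
  have habs2 : |x - y| = x - y := abs_of_nonneg (by linarith)
  rw [habs, habs2]
  have hsq : x ^ (ρ - 1) * x ^ (ρ - 1) = x ^ (2 * ρ - 2) := by
    rw [← Real.rpow_add hx]; ring_nf
  have hLx := hL x hx
  -- (σ (x^ρ - y^ρ))^2 ≤ σ² ρ² x^(2ρ-2) (x-y)²
  have hb : (σ * (x ^ ρ - y ^ ρ)) ^ 2 ≤ σ ^ 2 * ρ ^ 2 * x ^ (2 * ρ - 2) * (x - y) ^ 2 := by
    have hnn : 0 ≤ ρ * x ^ (ρ - 1) * (x - y) :=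
      mul_nonneg (mul_nonneg (by linarith) (Real.rpow_pos_of_pos hx (ρ - 1)).le) (by linarith)
    have h3 : (x ^ ρ - y ^ ρ) ^ 2 ≤ (ρ * x ^ (ρ - 1) * (x - y)) ^ 2 :=
      sq_le_sq' (by linarith) h2
    calc (σ * (x ^ ρ - y ^ ρ)) ^ 2 = σ ^ 2 * (x ^ ρ - y ^ ρ) ^ 2 := by ring
      _ ≤ σ ^ 2 * (ρ * x ^ (ρ - 1) * (x - y)) ^ 2 :=
          mul_le_mul_of_nonneg_left h3 (sq_nonneg σ)
      _ = σ ^ 2 * ρ ^ 2 * x ^ (2 * ρ - 2) * (x - y) ^ 2 := by rw [← hsq]; ring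
  nlinarith [mul_le_mul_of_nonneg_left h1 (mul_nonneg hα₂.le (sub_nonneg.2 hxy)),
    Real.rpow_pos_of_pos hx (r - 1), sq_nonneg (x - y)]

theorem monotonicity_noncritical
    (α₂ σ r ρ : ℝ) (hα₂ : 0 < α₂) (hσ : 0 < σ) (hr : 1 < r) (hρ : 1 < ρ)
    (hnc : r + 1 > 2 * ρ) :
    ∃ υ : ℝ, 2 < υ ∧ ∃ L : ℝ, 0 < L ∧ ∀ x y : ℝ, 0 < x → 0 < y →
      (x - y) * ((-α₂ * x ^ r) - (-α₂ * y ^ r))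
        + (υ - 1) / 2 * |σ * x ^ ρ - σ * y ^ ρ| ^ 2 ≤ L * |x - y| ^ 2 := by
  obtain ⟨L, hLpos, hL⟩ := young_bound (σ ^ 2 * ρ ^ 2) α₂ (2 * ρ - 2) (r - 1)
    (by positivity) hα₂ (by linarith) (by linarith)
  refine ⟨3, by norm_num, L, hLpos, fun x y hx hy => ?_⟩
  rcases le_total y x with h | h
  · exact main_aux α₂ σ r ρ L hα₂ hσ hr hρ hL x y hy h
  · have := main_aux α₂ σ r ρ L hα₂ hσ hr hρ hL y x hx h
    have e1 : |σ * x ^ ρ - σ * y ^ ρ| = |σ * y ^ ρ - σ * x ^ ρ| := abs_sub_comm _ _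
    have e2 : |x - y| = |y - x| := abs_sub_comm _ _
    rw [e1, e2]; nlinarith [this]
end

section
/- For all real x, y > 0 and parameters α₂, σ > 0, r > 1 with r + 1 = 2ρ and α₂/σ² > (1/8)(r + 2 + 1/r), there exist constants υ > 2 and L > 0 such that (x - y)(f(x) - f(y)) + ((υ - 1)/2)|g(x) - g(y)|² ≤ L|x - y|², where f(x) = -α₂ x^r and g(x) = σ x^ρ. -/
open Real Set

lemma bern_tangent (ρ : ℝ) (hρ : 1 ≤ ρ) {y x : ℝ} (hy : 0 < y) (hx : 0 < x) (hxy : y ≤ x) :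
    x ^ ρ - y ^ ρ ≤ ρ * x ^ (ρ - 1) * (x - y) := by
  have hs : (-1 : ℝ) ≤ y / x - 1 := by
    have : 0 < y / x := div_pos hy hx
    linarith
  have h := one_add_mul_self_le_rpow_one_add hs hρ
  have hyx : (1:ℝ) + (y/x - 1) = y/x := by ring
  rw [hyx, Real.div_rpow hy.le hx.le] at h
  have hxρ : (0:ℝ) < x ^ ρ := Real.rpow_pos_of_pos hx ρ
  have h2 : (1 + ρ * (y / x - 1)) * x ^ ρ ≤ y ^ ρ := by
    calc (1 + ρ * (y / x - 1)) * x ^ ρ ≤ (y ^ ρ / x ^ ρ) * x ^ ρ :=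
          mul_le_mul_of_nonneg_right h hxρ.le
      _ = y ^ ρ := by field_simp
  have hx1 : x ^ ρ / x = x ^ (ρ - 1) := by
    rw [Real.rpow_sub hx, Real.rpow_one]
  have h3 : ρ * (y / x - 1) * x ^ ρ = ρ * x ^ (ρ - 1) * (y - x) := by
    rw [← hx1]; field_simp
  nlinarith [h2, h3]

lemma key_ineq (ρ : ℝ) (hρ : 1 < ρ) {y x : ℝ} (hy : 0 < y) (hxy : y ≤ x) :
    (2*ρ - 1) * (x ^ ρ - y ^ ρ)^2
      ≤ ρ^2 * (x - y) * (x ^ (2*ρ - 1) - y ^ (2*ρ - 1)) := by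
  obtain ⟨r, hrdef⟩ : ∃ r : ℝ, r = 2*ρ - 1 := ⟨_, rfl⟩
  rw [← hrdef]
  have hr1 : (1:ℝ) < r := by rw [hrdef]; linarith
  have hx : 0 < x := lt_of_lt_of_le hy hxy
  have hDG : ∀ z : ℝ, 0 < z →
      HasDerivAt (fun w : ℝ => ρ^2*(w-y)*(w^r - y^r) - r*(w^ρ - y^ρ)^2)
        (ρ^2*((z^r - y^r) + r*(z-y)*z^(r-1)) - 2*r*ρ*z^(ρ-1)*(z^ρ - y^ρ)) z := by
    intro z hz
    have d1 : HasDerivAt (fun w : ℝ => w ^ r) (r * z ^ (r-1)) z :=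
      Real.hasDerivAt_rpow_const (Or.inl hz.ne')
    have d2 : HasDerivAt (fun w : ℝ => w ^ ρ) (ρ * z ^ (ρ-1)) z :=
      Real.hasDerivAt_rpow_const (Or.inl hz.ne')
    have hA := (((hasDerivAt_id z).sub_const y).mul (d1.sub_const (y^r))).const_mul (ρ^2)
    have hB := ((d2.sub_const (y^ρ)).pow 2).const_mul r
    have := hA.sub hB
    convert this using 1
    · rfl
    · rfl
    · funext w; simp only [id_eq, Pi.sub_apply, Pi.mul_apply, Pi.add_apply, Pi.pow_apply]; ring
    · simp only [id_eq, pow_one, Nat.cast_ofNat]; push_cast; ring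
  have hDG1 : ∀ z : ℝ, 0 < z →
      HasDerivAt (fun w : ℝ => ρ^2*((w^r - y^r) + r*(w-y)*w^(r-1)) - 2*r*ρ*w^(ρ-1)*(w^ρ - y^ρ))
        (2*r*ρ*(ρ-1)*z^(ρ-2)*(ρ*(z-y)*z^(ρ-1) - (z^ρ - y^ρ))) z := by
    intro z hz
    have d1 : HasDerivAt (fun w : ℝ => w ^ r) (r * z ^ (r-1)) z :=
      Real.hasDerivAt_rpow_const (Or.inl hz.ne')
    have d2 : HasDerivAt (fun w : ℝ => w ^ ρ) (ρ * z ^ (ρ-1)) z :=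
      Real.hasDerivAt_rpow_const (Or.inl hz.ne')
    have d3 : HasDerivAt (fun w : ℝ => w ^ (r-1)) ((r-1) * z ^ (r-1-1)) z :=
      Real.hasDerivAt_rpow_const (Or.inl hz.ne')
    have d4 : HasDerivAt (fun w : ℝ => w ^ (ρ-1)) ((ρ-1) * z ^ (ρ-1-1)) z :=
      Real.hasDerivAt_rpow_const (Or.inl hz.ne')
    have hA := ((d1.sub_const (y^r)).add
      ((((hasDerivAt_id z).sub_const y).mul d3).const_mul r)).const_mul (ρ^2)
    have hB := (d4.mul (d2.sub_const (y^ρ))).const_mul (2*r*ρ)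
    have hmain := hA.sub hB
    convert hmain using 1
    · rfl
    · rfl
    · funext w; simp only [id_eq, Pi.sub_apply, Pi.mul_apply, Pi.add_apply, Pi.pow_apply]; ring
    have e1 : z^(r-1) = z^(ρ-1)*z^(ρ-1) := by
      rw [← Real.rpow_add hz]; congr 1; rw [hrdef]; ring
    have e2 : z^(r-1-1) = z^(ρ-2)*z^(ρ-1) := by
      rw [← Real.rpow_add hz]; congr 1; rw [hrdef]; ring
    have e3 : z^(ρ-1-1) = z^(ρ-2) := by congr 1; ring
    simp only [id_eq]
    rw [e1, e2, e3, hrdef]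
    ring
  have hG2nn : ∀ z ∈ Ici y, 0 ≤ 2*r*ρ*(ρ-1)*z^(ρ-2)*(ρ*(z-y)*z^(ρ-1) - (z^ρ - y^ρ)) := by
    intro z hz
    have hz0 : 0 < z := lt_of_lt_of_le hy hz
    have hb := bern_tangent ρ hρ.le hy hz0 hz
    have h1 : 0 ≤ ρ*(z-y)*z^(ρ-1) - (z^ρ - y^ρ) := by linarith
    have hzp : (0:ℝ) < z^(ρ-2) := Real.rpow_pos_of_pos hz0 _
    have h2 : (0:ℝ) < 2*r*ρ*(ρ-1) := by
      have hρ1 : (0:ℝ) < ρ - 1 := by linarith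
      have hρ0' : (0:ℝ) < ρ := by linarith
      have hr0' : (0:ℝ) < r := by linarith
      exact mul_pos (mul_pos (mul_pos two_pos hr0') hρ0') hρ1
    have h3 : (0:ℝ) ≤ 2*r*ρ*(ρ-1)*z^(ρ-2) := (mul_pos h2 hzp).le
    exact mul_nonneg h3 h1
  have hG1nn : ∀ z ∈ Ici y,
      0 ≤ ρ^2*((z^r - y^r) + r*(z-y)*z^(r-1)) - 2*r*ρ*z^(ρ-1)*(z^ρ - y^ρ) := by
    have mono : MonotoneOn
        (fun w : ℝ => ρ^2*((w^r - y^r) + r*(w-y)*w^(r-1)) - 2*r*ρ*w^(ρ-1)*(w^ρ - y^ρ))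
        (Ici y) := by
      apply monotoneOn_of_deriv_nonneg (convex_Ici y)
      · exact fun z hz => ((hDG1 z (lt_of_lt_of_le hy hz)).continuousAt).continuousWithinAt
      · intro z hz
        rw [interior_Ici] at hz
        exact ((hDG1 z (lt_of_lt_of_le hy hz.le)).differentiableAt).differentiableWithinAt
      · intro z hz
        rw [interior_Ici] at hz
        have hz0 : 0 < z := lt_of_lt_of_le hy hz.le
        rw [(hDG1 z hz0).deriv]
        exact hG2nn z (mem_Ici.mpr (le_of_lt hz))
    intro z hz
    have := mono self_mem_Ici hz hz
    simp only [sub_self] at this ⊢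
    nlinarith [this]
  have monoG : MonotoneOn (fun w : ℝ => ρ^2*(w-y)*(w^r - y^r) - r*(w^ρ - y^ρ)^2) (Ici y) := by
    apply monotoneOn_of_deriv_nonneg (convex_Ici y)
    · exact fun z hz => ((hDG z (lt_of_lt_of_le hy hz)).continuousAt).continuousWithinAt
    · intro z hz
      rw [interior_Ici] at hz
      exact ((hDG z (lt_of_lt_of_le hy hz.le)).differentiableAt).differentiableWithinAt
    · intro z hz
      rw [interior_Ici] at hz
      have hz0 : 0 < z := lt_of_lt_of_le hy hz.le
      rw [(hDG z hz0).deriv]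
      exact hG1nn z (mem_Ici.mpr (le_of_lt hz))
  have := monoG self_mem_Ici hxy hxy
  simp only [sub_self] at this
  nlinarith [this]

theorem monotonicity_critical
    (α₂ σ r ρ : ℝ) (hα₂ : 0 < α₂) (hσ : 0 < σ) (hr : 1 < r) (hρ : 1 < ρ)
    (hc : r + 1 = 2 * ρ) (hratio : α₂ / σ ^ 2 > (1 / 8) * (r + 2 + 1 / r)) :
    ∃ υ : ℝ, 2 < υ ∧ ∃ L : ℝ, 0 < L ∧ ∀ x y : ℝ, 0 < x → 0 < y →
      (x - y) * ((-α₂ * x ^ r) - (-α₂ * y ^ r))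
        + (υ - 1) / 2 * |σ * x ^ ρ - σ * y ^ ρ| ^ 2 ≤ L * |x - y| ^ 2 := by
  have hr0 : (0:ℝ) < r := by linarith
  have hρ0 : (0:ℝ) < ρ := by linarith
  have hσ2 : (0:ℝ) < σ^2 := by positivity
  refine ⟨1 + 2*α₂*r/(σ^2*ρ^2), ?_, 1, one_pos, ?_⟩
  · have hρval : ρ = (r+1)/2 := by linarith
    have h1 : (1/8) * (r + 2 + 1/r) = ρ^2/(2*r) := by
      rw [hρval]; field_simp; ring
    rw [h1] at hratio
    have h2 : (1:ℝ) < 2*α₂*r/(σ^2*ρ^2) := by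
      rw [lt_div_iff₀ (by positivity)]
      rw [gt_iff_lt, div_lt_div_iff₀ (by positivity) hσ2] at hratio
      nlinarith
    linarith
  · intro x y hx hy
    have main : ∀ a b : ℝ, 0 < b → b ≤ a →
        (a - b) * ((-α₂ * a ^ r) - (-α₂ * b ^ r))
          + (1 + 2*α₂*r/(σ^2*ρ^2) - 1) / 2 * |σ * a ^ ρ - σ * b ^ ρ| ^ 2
          ≤ 1 * |a - b| ^ 2 := by
      intro a b hb hab
      have ha : 0 < a := lt_of_lt_of_le hb hab
      have hkey := key_ineq ρ hρ hb hab
      have hrρ : 2*ρ - 1 = r := by linarith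
      rw [hrρ] at hkey
      have habs : |σ * a ^ ρ - σ * b ^ ρ| ^ 2 = σ^2 * (a^ρ - b^ρ)^2 := by
        rw [sq_abs]; ring
      rw [habs]
      have hc1 : (1 + 2*α₂*r/(σ^2*ρ^2) - 1) / 2 * σ^2 = α₂*r/ρ^2 := by
        field_simp; ring
      have hLHS : (a - b) * ((-α₂ * a ^ r) - (-α₂ * b ^ r))
          + (1 + 2*α₂*r/(σ^2*ρ^2) - 1) / 2 * (σ^2 * (a^ρ - b^ρ)^2)
          = -α₂ * ((a-b)*(a^r - b^r)) + (α₂*r/ρ^2) * (a^ρ - b^ρ)^2 := by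
        rw [mul_comm ((1 + 2*α₂*r/(σ^2*ρ^2) - 1) / 2) (σ^2 * (a^ρ - b^ρ)^2)]
        rw [show σ^2 * (a^ρ - b^ρ)^2 * ((1 + 2*α₂*r/(σ^2*ρ^2) - 1) / 2)
            = ((1 + 2*α₂*r/(σ^2*ρ^2) - 1) / 2 * σ^2) * (a^ρ - b^ρ)^2 by ring, hc1]
        ring
      rw [hLHS]
      have h4 : (α₂*r/ρ^2) * (a^ρ - b^ρ)^2 ≤ α₂ * ((a-b)*(a^r - b^r)) := by
        rw [div_mul_eq_mul_div, div_le_iff₀ (by positivity)]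
        nlinarith [hkey]
      have h5 : (0:ℝ) ≤ |a - b|^2 := sq_nonneg _
      linarith
    rcases le_total y x with h | h
    · exact main x y hy h
    · have := main y x hx h
      have e1 : (y - x) * ((-α₂ * y ^ r) - (-α₂ * x ^ r))
          = (x - y) * ((-α₂ * x ^ r) - (-α₂ * y ^ r)) := by ring
      have e2 : |σ * y ^ ρ - σ * x ^ ρ| = |σ * x ^ ρ - σ * y ^ ρ| := abs_sub_comm _ _
      have e3 : |y - x| = |x - y| := abs_sub_comm _ _
      rw [e1, e2, e3] at this
      exact this
end
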